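/- Let A := F_3[x][y]/(y² − x(x+1)(x+2)(x²+1)), an integral domain over F_3, and for nonzero a ∈ A let deg a := dim_{F_3}(A/aA). Then ∑_{d≥0} (∑_{a ∈ A∖{0}, deg a = d} a²) X^d = X² − 1 in A[X]; in particular the inner sums vanish for all d ∉ {0, 2}, and the zeta value ζ(−2) of A is 0 with order of vanishing exactly 1 (so Thakur's hyperelliptic order-2 theorem fails for q = 3 even though l_3(2) = 2 = g). -/

import Mathlib

open Polynomial

/-- The degree of a nonzero element `a` of a ring `A` containing a field `F`:
`deg a = dim_F (A / aA)`. -/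
noncomputable def adeg (F : Type*) {A : Type*} [Field F] [CommRing A] [Algebra F A]
    (a : A) : ℕ :=
  Module.finrank F (A ⧸ Ideal.span {a})

/-- A positive integer `m` is a gap of `A` (at `∞`) if no nonzero `a ∈ A` has `deg a = m`. -/
def IsGapA (F : Type*) (A : Type*) [Field F] [CommRing A] [Algebra F A] (m : ℕ) : Prop :=
  ¬ ∃ a : A, a ≠ 0 ∧ adeg F a = m

/-- The `d`-th coefficient `∑_{a ∈ A∖{0}, deg a = d} a^s` of the zeta polynomial of `A`. -/
noncomputable def zetaCoeff (F : Type*) {A : Type*} [Field F] [CommRing A] [Algebra F A]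
    (s d : ℕ) : A :=
  ∑ᶠ a ∈ {a : A | a ≠ 0 ∧ adeg F a = d}, a ^ s

/-- The zeta polynomial `Z_s(X) = ∑_{d ≥ 0} (∑_{a ∈ A∖{0}, deg a = d} a^s) X^d ∈ A[X]`. -/
noncomputable def zetaPoly (F : Type*) (A : Type*) [Field F] [CommRing A] [Algebra F A]
    (s : ℕ) : Polynomial A :=
  ∑ᶠ d : ℕ, C (zetaCoeff F s d) * X ^ d

/-- The coordinate ring `A = F_3[x][y]/(y² − x(x+1)(x+2)(x²+1))` of the genus-2
hyperelliptic curve `y² = x(x+1)(x+2)(x²+1)` over `F_3`. -/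
noncomputable abbrev A15 : Type :=
  AdjoinRoot (X ^ 2 - C (X * (X + 1) * (X + 2) * (X ^ 2 + 1) : Polynomial (ZMod 3)) :
    (Polynomial (ZMod 3))[X])


noncomputable section

abbrev fpol : Polynomial (ZMod 3) := X * (X + 1) * (X + 2) * (X ^ 2 + 1)
abbrev gpol : (Polynomial (ZMod 3))[X] :=
  X ^ 2 - C (X * (X + 1) * (X + 2) * (X ^ 2 + 1) : Polynomial (ZMod 3))

lemma m1 : (X + 1 : Polynomial (ZMod 3)).Monic := by simpa using monic_X_add_C (1 : ZMod 3)
lemma m2 : (X + 2 : Polynomial (ZMod 3)).Monic := by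
  have := monic_X_add_C (2 : ZMod 3)
  rwa [show (C (2 : ZMod 3)) = (2 : Polynomial (ZMod 3)) from map_ofNat C 2] at this
lemma m3 : (X ^ 2 + 1 : Polynomial (ZMod 3)).Monic := by
  simpa using monic_X_pow_add_C (R := ZMod 3) (a := 1) (two_ne_zero)

lemma fpol_monic : fpol.Monic :=
  ((monic_X.mul m1).mul m2).mul m3

lemma fpol_ne_zero : fpol ≠ 0 := fpol_monic.ne_zero

lemma fpol_natDegree : fpol.natDegree = 5 := by
  rw [Monic.natDegree_mul ((monic_X.mul m1).mul m2) m3,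
    Monic.natDegree_mul (monic_X.mul m1) m2, Monic.natDegree_mul monic_X m1]
  have h1 : (X + 1 : Polynomial (ZMod 3)).natDegree = 1 := by
    simpa using natDegree_X_add_C (1 : ZMod 3)
  have h2 : (X + 2 : Polynomial (ZMod 3)).natDegree = 1 := by
    have := natDegree_X_add_C (2 : ZMod 3)
    rw [show (C (2 : ZMod 3)) = (2 : Polynomial (ZMod 3)) from map_ofNat C 2] at this
    exact this
  have h3 : (X ^ 2 + 1 : Polynomial (ZMod 3)).natDegree = 2 := by
    simpa using natDegree_X_pow_add_C (n := 2) (r := (1 : ZMod 3))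
  rw [natDegree_X, h1, h2, h3]

lemma gpol_monic : gpol.Monic := by
  apply monic_X_pow_sub
  calc degree (C fpol) ≤ 0 := degree_C_le
  _ < 2 := by norm_num

lemma gpol_natDegree : gpol.natDegree = 2 := by
  have := gpol_monic
  rw [show gpol = X ^ 2 - C fpol from rfl] at this ⊢
  have h : (C fpol).natDegree < (X ^ 2 : (Polynomial (ZMod 3))[X]).natDegree := by
    rw [natDegree_C, natDegree_X_pow]; norm_num
  rw [natDegree_sub_eq_left_of_natDegree_lt h, natDegree_X_pow]

lemma gpol_irred : Irreducible gpol := by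
  rw [gpol_monic.irreducible_iff_irreducible_map_fraction_map (K := RatFunc (ZMod 3))]
  have hmap : gpol.map (algebraMap (Polynomial (ZMod 3)) (RatFunc (ZMod 3))) =
      X ^ 2 - C (algebraMap (Polynomial (ZMod 3)) (RatFunc (ZMod 3)) fpol) := by
    simp only [Polynomial.map_sub, Polynomial.map_pow, map_X, map_C]
  rw [hmap]
  apply X_pow_sub_C_irreducible_of_prime Nat.prime_two
  intro b hb
  have hinj := IsFractionRing.injective (Polynomial (ZMod 3)) (RatFunc (ZMod 3))
  have hf0 : algebraMap (Polynomial (ZMod 3)) (RatFunc (ZMod 3)) fpol ≠ 0 := by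
    intro h
    exact fpol_ne_zero (hinj (by rw [h, map_zero]))
  have hb0 : b ≠ 0 := by
    rintro rfl; rw [← hb] at hf0; simp at hf0
  have h1 : RatFunc.intDegree (b ^ 2) = 2 * RatFunc.intDegree b := by
    rw [pow_two, RatFunc.intDegree_mul hb0 hb0]; ring
  rw [hb] at h1
  rw [show algebraMap (Polynomial (ZMod 3)) (RatFunc (ZMod 3)) fpol
      = algebraMap (Polynomial (ZMod 3)) (RatFunc (ZMod 3)) fpol from rfl,
    RatFunc.intDegree_polynomial, fpol_natDegree] at h1
  omega

lemma gpol_prime : Prime gpol :=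
  (UniqueFactorizationMonoid.irreducible_iff_prime).mp gpol_irred

instance : IsDomain (AdjoinRoot gpol) := AdjoinRoot.isDomain_of_prime gpol_prime

lemma three_eq_zero : (3 : AdjoinRoot gpol) = 0 := by
  rw [← map_ofNat (algebraMap (ZMod 3) (AdjoinRoot gpol)) 3,
    show (3 : ZMod 3) = 0 by decide, map_zero]

lemma three_eq_zero' : (3 : Polynomial (ZMod 3)) = 0 := by
  rw [← map_ofNat (C : ZMod 3 →+* Polynomial (ZMod 3)) 3,
    show (3 : ZMod 3) = 0 by decide, map_zero]

local notation "Rp" => Polynomial (ZMod 3)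
local notation "Aa" => AdjoinRoot gpol

def ogn : Rp →+* Aa := AdjoinRoot.of gpol
def yy : Aa := AdjoinRoot.root gpol

lemma yy_sq : yy ^ 2 = ogn fpol := by
  have h : AdjoinRoot.mk gpol gpol = 0 := by
    rw [AdjoinRoot.mk_eq_zero]
  have h2 := AdjoinRoot.aeval_eq (f := gpol) gpol
  rw [h] at h2
  have : aeval (AdjoinRoot.root gpol) (gpol) =
      (AdjoinRoot.root gpol) ^ 2 - AdjoinRoot.of gpol fpol := by
    simp [AdjoinRoot.aeval_eq, map_sub, map_pow]
  rw [this] at h2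
  have := sub_eq_zero.mp h2
  exact this

/-- representation -/
lemma rep_exists (a : Aa) : ∃ p q : Rp, a = ogn p + ogn q * yy := by
  obtain ⟨P, rfl⟩ := AdjoinRoot.mk_surjective (g := gpol) a
  have hmod : AdjoinRoot.mk gpol (P %ₘ gpol) = AdjoinRoot.mk gpol P := by
    rw [modByMonic_eq_sub_mul_div P gpol]
    rw [map_sub, map_mul]
    have hz : AdjoinRoot.mk gpol gpol = 0 := AdjoinRoot.mk_eq_zero.mpr dvd_rfl
    rw [hz, zero_mul, sub_zero]
  have hdeg : (P %ₘ gpol).degree ≤ 1 := by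
    have := degree_modByMonic_lt P gpol_monic
    have h2 : gpol.degree = 2 := by
      rw [degree_eq_natDegree gpol_monic.ne_zero, gpol_natDegree]; rfl
    rw [h2] at this
    exact Order.le_of_lt_succ (by exact_mod_cast this)
  refine ⟨(P %ₘ gpol).coeff 0, (P %ₘ gpol).coeff 1, ?_⟩
  conv_lhs => rw [← hmod, eq_X_add_C_of_degree_le_one hdeg]
  rw [map_add, map_mul]
  simp only [AdjoinRoot.mk_C, AdjoinRoot.mk_X]
  show _ = ogn _ + ogn _ * AdjoinRoot.root gpol
  rw [add_comm]
  rfl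

lemma rep_zero {p q : Rp} (h : ogn p + ogn q * yy = 0) : p = 0 ∧ q = 0 := by
  have hm : AdjoinRoot.mk gpol (C p + C q * X) = 0 := by
    rw [map_add, map_mul]
    simpa [AdjoinRoot.mk_C, AdjoinRoot.mk_X, ogn, yy] using h
  rw [AdjoinRoot.mk_eq_zero] at hm
  by_cases h0 : C p + C q * X = 0
  · constructor
    · have := congrArg (fun r => coeff r 0) h0
      simpa using this
    · have := congrArg (fun r => coeff r 1) h0
      simpa using this
  · exfalso
    have hle := Polynomial.natDegree_le_of_dvd hm h0
    rw [gpol_natDegree] at hle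
    have : (C p + C q * X).natDegree ≤ 1 := by
      apply natDegree_add_le_of_degree_le
      · simp
      · exact (natDegree_C_mul_le q X).trans (by simp)
    omega

lemma conj_aeval : aeval (-yy) gpol = 0 := by
  rw [map_sub, map_pow, aeval_X, aeval_C]
  rw [neg_pow, show ((-1 : Aa) ^ 2) = 1 by ring]
  rw [one_mul]
  have := yy_sq
  rw [this]
  show ogn fpol - ogn fpol = 0
  exact sub_self _

def conjHom : Aa →ₐ[Rp] Aa := AdjoinRoot.liftAlgHom gpol (Algebra.ofId Rp Aa) (-yy) conj_aeval

lemma conjHom_root : conjHom yy = -yy := AdjoinRoot.liftAlgHom_root _ _ _ _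

lemma conjHom_of (p : Rp) : conjHom (ogn p) = ogn p :=
  conjHom.commutes p

lemma conjHom_invol : conjHom.comp conjHom = AlgHom.id Rp Aa := by
  apply AdjoinRoot.algHom_ext
  show conjHom (conjHom yy) = yy
  rw [conjHom_root, map_neg, conjHom_root, neg_neg]

def conjEquiv : Aa ≃ₐ[Rp] Aa := AlgEquiv.ofAlgHom conjHom conjHom conjHom_invol conjHom_invol

lemma norm_identity (p q : Rp) :
    (ogn p + ogn q * yy) * (ogn p - ogn q * yy) = ogn (p ^ 2 - fpol * q ^ 2) := by
  have hy := yy_sq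
  have expand : (ogn p + ogn q * yy) * (ogn p - ogn q * yy)
      = ogn p ^ 2 - ogn q ^ 2 * yy ^ 2 := by ring
  rw [expand, hy]
  simp only [map_sub, map_mul, map_pow]
  ring

lemma conj_apply (p q : Rp) : conjEquiv (ogn p + ogn q * yy) = ogn p - ogn q * yy := by
  show conjHom (ogn p + ogn q * yy) = _
  rw [map_add, map_mul, conjHom_of, conjHom_of, conjHom_root]
  ring

/-- ZMod 3 linearity of ring homs -/
lemma ringHom_algebraMap_zmod {M N : Type*} [Ring M] [Ring N]
    [Algebra (ZMod 3) M] [Algebra (ZMod 3) N] (f : M →+* N) (c : ZMod 3) :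
    f (algebraMap (ZMod 3) M c) = algebraMap (ZMod 3) N c := by
  obtain ⟨k, rfl⟩ := ZMod.natCast_zmod_surjective c
  rw [map_natCast, map_natCast, map_natCast]

def zl {M N : Type*} [Ring M] [Ring N]
    [Algebra (ZMod 3) M] [Algebra (ZMod 3) N] (f : M →+* N) : M →ₗ[ZMod 3] N :=
  { f with
    map_smul' := fun c x => by
      show f (c • x) = c • f x
      rw [Algebra.smul_def, Algebra.smul_def, map_mul, ringHom_algebraMap_zmod f c] }

def zle {M N : Type*} [Ring M] [Ring N]
    [Algebra (ZMod 3) M] [Algebra (ZMod 3) N] (e : M ≃+* N) : M ≃ₗ[ZMod 3] N :=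
  { zl e.toRingHom, e.toEquiv with }

lemma finrank_eq_of_ringEquiv {M N : Type*} [Ring M] [Ring N]
    [Algebra (ZMod 3) M] [Algebra (ZMod 3) N] (e : M ≃+* N) :
    Module.finrank (ZMod 3) M = Module.finrank (ZMod 3) N :=
  (zle e).finrank_eq

lemma finiteDimensional_of_ringEquiv {M N : Type*} [Ring M] [Ring N]
    [Algebra (ZMod 3) M] [Algebra (ZMod 3) N] (e : M ≃+* N)
    [FiniteDimensional (ZMod 3) N] : FiniteDimensional (ZMod 3) M :=
  Module.Finite.equiv (zle e).symm

lemma adeg_map_ringEquiv {M N : Type*} [CommRing M] [CommRing N]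
    [Algebra (ZMod 3) M] [Algebra (ZMod 3) N] (e : M ≃+* N) (a : M) :
    adeg (ZMod 3) (e a) = adeg (ZMod 3) a := by
  unfold adeg
  have h : Ideal.span {e a} = (Ideal.span {a}).map (e : M →+* N) := by
    rw [Ideal.map_span, Set.image_singleton]
    rfl
  exact (finrank_eq_of_ringEquiv (Ideal.quotientEquiv _ _ e h)).symm

lemma ogn_ne_zero {N : Rp} (hN : N ≠ 0) : ogn N ≠ 0 := by
  intro h
  apply hN
  have h2 : ogn N + ogn 0 * yy = 0 := by rw [map_zero, zero_mul, add_zero]; exact h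
  exact (rep_zero h2).1

set_option maxHeartbeats 1000000 in
set_option synthInstance.maxHeartbeats 400000 in
lemma adeg_ogn {N : Rp} (hN : N ≠ 0) :
    adeg (ZMod 3) (ogn N) = 2 * N.natDegree ∧
    FiniteDimensional (ZMod 3) (AdjoinRoot gpol ⧸ Ideal.span {ogn N}) := by
  by_cases hNdeg : N.natDegree = 0
  · -- N is a nonzero constant, hence a unit
    have hNunit : IsUnit N := by
      rw [Polynomial.eq_C_of_natDegree_eq_zero hNdeg]
      apply Polynomial.isUnit_C.mpr
      apply Ne.isUnit
      intro h
      apply hN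
      rw [Polynomial.eq_C_of_natDegree_eq_zero hNdeg, h, map_zero]
    have hunit : IsUnit (ogn N) := hNunit.map ogn
    have htop : Ideal.span {ogn N} = (⊤ : Ideal (AdjoinRoot gpol)) :=
      Ideal.span_singleton_eq_top.mpr hunit
    rw [htop, hNdeg]
    haveI hsing : Subsingleton (AdjoinRoot gpol ⧸ (⊤ : Ideal (AdjoinRoot gpol))) :=
      Ideal.Quotient.subsingleton_iff.mpr rfl
    refine ⟨?_, ?_⟩
    · unfold adeg
      rw [htop]
      simp [Module.finrank_zero_of_subsingleton]
    · exact Module.Finite.of_basis (Module.Basis.empty (ι := Fin 0) _)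
  haveI hnontriv : Nontrivial (Rp ⧸ Ideal.span {N}) := by
    apply Ideal.Quotient.nontrivial_iff.mpr
    intro h
    exact hNdeg (Polynomial.natDegree_eq_zero_of_isUnit (Ideal.span_singleton_eq_top.mp h))
  set I : Ideal Rp := Ideal.span {N} with hI
  have hspan : Ideal.span {ogn N} = I.map (AdjoinRoot.of gpol) := by
    rw [hI, Ideal.map_span, Set.image_singleton]; rfl
  set gbar : Polynomial (Rp ⧸ I) := gpol.map (Ideal.Quotient.mk I) with hgbar
  have hgbarmonic : gbar.Monic := gpol_monic.map _
  have hgdim : gbar.natDegree = 2 := by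
    rw [hgbar, gpol_monic.natDegree_map, gpol_natDegree]
  have e' : (AdjoinRoot gpol ⧸ I.map (AdjoinRoot.of gpol)) ≃+* AdjoinRoot gbar :=
    AdjoinRoot.quotAdjoinRootEquivQuotPolynomialQuot I gpol
  let pbB := AdjoinRoot.powerBasis hN
  let pbT := AdjoinRoot.powerBasis' hgbarmonic
  let bB : Module.Basis (Fin pbB.dim) (ZMod 3) (Rp ⧸ I) := pbB.basis
  let btot : Module.Basis (Fin pbB.dim × Fin pbT.dim) (ZMod 3) (AdjoinRoot gbar) :=
    bB.smulTower pbT.basis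
  have hBdim : pbB.dim = N.natDegree := rfl
  have hTdim : pbT.dim = 2 := by
    show gbar.natDegree = 2
    exact hgdim
  have hfr : Module.finrank (ZMod 3) (AdjoinRoot gbar) = 2 * N.natDegree := by
    rw [Module.finrank_eq_card_basis btot, Fintype.card_prod, Fintype.card_fin,
      Fintype.card_fin, hBdim, hTdim]
    ring
  haveI hfdT : FiniteDimensional (ZMod 3) (AdjoinRoot gbar) := Module.Finite.of_basis btot
  constructor
  · unfold adeg
    rw [hspan, finrank_eq_of_ringEquiv e', hfr]
  · rw [hspan]
    exact finiteDimensional_of_ringEquiv e'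

lemma adeg_mul_of_fd {a b : AdjoinRoot gpol} (ha : a ≠ 0) (hb : b ≠ 0)
    (hfd : FiniteDimensional (ZMod 3) (AdjoinRoot gpol ⧸ Ideal.span {a * b})) :
    adeg (ZMod 3) (a * b) = adeg (ZMod 3) a + adeg (ZMod 3) b := by
  classical
  set I : Ideal (AdjoinRoot gpol) := Ideal.span {a * b} with hI
  set J : Ideal (AdjoinRoot gpol) := Ideal.span {a} with hJ
  have hIJ : I ≤ J := by
    rw [hI, hJ]
    exact Ideal.span_singleton_le_span_singleton.mpr ⟨b, rfl⟩
  let mkI : AdjoinRoot gpol →ₗ[ZMod 3] AdjoinRoot gpol ⧸ I := zl (Ideal.Quotient.mk I)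
  let l : AdjoinRoot gpol →ₗ[ZMod 3] AdjoinRoot gpol ⧸ I :=
    mkI.comp (LinearMap.mulLeft (ZMod 3) a)
  have hker : LinearMap.ker l = Submodule.restrictScalars (ZMod 3) (Ideal.span {b}) := by
    ext x
    rw [LinearMap.mem_ker, Submodule.restrictScalars_mem]
    show Ideal.Quotient.mk I (a * x) = 0 ↔ _
    rw [Ideal.Quotient.eq_zero_iff_mem, hI, Ideal.mem_span_singleton,
      Ideal.mem_span_singleton]
    exact mul_dvd_mul_iff_left ha
  let m : (AdjoinRoot gpol ⧸ I) →ₗ[ZMod 3] (AdjoinRoot gpol ⧸ J) :=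
    zl (Ideal.Quotient.factor hIJ)
  have hm_surj : Function.Surjective m := by
    intro z
    obtain ⟨x, rfl⟩ := Ideal.Quotient.mk_surjective z
    exact ⟨Ideal.Quotient.mk I x, rfl⟩
  have hmker : LinearMap.ker m = LinearMap.range l := by
    ext z
    obtain ⟨x, rfl⟩ := Ideal.Quotient.mk_surjective z
    constructor
    · intro hz
      have hx : x ∈ J := by
        rw [LinearMap.mem_ker,
          show m (Ideal.Quotient.mk I x) = Ideal.Quotient.mk J x from rfl,
          Ideal.Quotient.eq_zero_iff_mem] at hz
        exact hz
      rw [hJ, Ideal.mem_span_singleton] at hx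
      obtain ⟨y, rfl⟩ := hx
      exact ⟨y, rfl⟩
    · rintro ⟨y, hy⟩
      rw [LinearMap.mem_ker, ← hy]
      show Ideal.Quotient.mk J (a * y) = 0
      rw [Ideal.Quotient.eq_zero_iff_mem, hJ, Ideal.mem_span_singleton]
      exact dvd_mul_right a y
  have e1 : (AdjoinRoot gpol ⧸ Ideal.span {b}) ≃ₗ[ZMod 3] LinearMap.range l :=
    (Submodule.Quotient.restrictScalarsEquiv (ZMod 3) (Ideal.span {b})).symm.trans
      ((Submodule.quotEquivOfEq _ _ hker.symm).trans l.quotKerEquivRange)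
  have e2 : ((AdjoinRoot gpol ⧸ I) ⧸ LinearMap.ker m) ≃ₗ[ZMod 3] (AdjoinRoot gpol ⧸ J) :=
    LinearMap.quotKerEquivOfSurjective m hm_surj
  have hq := Submodule.finrank_quotient_add_finrank (LinearMap.ker m)
  show Module.finrank (ZMod 3) (AdjoinRoot gpol ⧸ I) = _
  rw [← hq, e2.finrank_eq]
  congr 1
  rw [show Module.finrank (ZMod 3) ↥(LinearMap.ker m)
      = Module.finrank (ZMod 3) ↥(LinearMap.range l) by rw [hmker]]
  exact (e1.finrank_eq).symm

lemma norm_ne_zero {p q : Rp} (hpq : ¬(p = 0 ∧ q = 0)) : p ^ 2 - fpol * q ^ 2 ≠ 0 := by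
  intro h
  have h' : p ^ 2 = fpol * q ^ 2 := sub_eq_zero.mp h
  by_cases hq : q = 0
  · subst hq
    rw [mul_comm, zero_pow (by norm_num), zero_mul] at h'
    exact hpq ⟨pow_eq_zero_iff (by norm_num) |>.mp h', rfl⟩
  · by_cases hp : p = 0
    · subst hp
      rw [zero_pow (by norm_num)] at h'
      exact hq (pow_eq_zero_iff (n := 2) (by norm_num) |>.mp
        ((mul_eq_zero.mp h'.symm).resolve_left fpol_ne_zero))
    · have hd := congrArg natDegree h'
      rw [natDegree_pow, natDegree_mul fpol_ne_zero (pow_ne_zero 2 hq),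
        fpol_natDegree, natDegree_pow] at hd
      omega

lemma norm_natDegree_q0 (p : Rp) :
    (p ^ 2 - fpol * (0 : Rp) ^ 2).natDegree = 2 * p.natDegree := by
  rw [zero_pow (by norm_num), mul_zero, sub_zero, natDegree_pow]

lemma norm_natDegree {p q : Rp} (hq : q ≠ 0) :
    (p ^ 2 - fpol * q ^ 2).natDegree = max (2 * p.natDegree) (2 * q.natDegree + 5) := by
  have hfq : (fpol * q ^ 2).natDegree = 2 * q.natDegree + 5 := by
    rw [natDegree_mul fpol_ne_zero (pow_ne_zero 2 hq), fpol_natDegree, natDegree_pow]; ring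
  by_cases hp : p = 0
  · subst hp
    rw [zero_pow (by norm_num), zero_sub, natDegree_neg, hfq]
    rw [natDegree_zero]
    omega
  · have hps : ((p : Rp) ^ 2).natDegree = 2 * p.natDegree := natDegree_pow p 2
    rcases lt_trichotomy (2 * p.natDegree) (2 * q.natDegree + 5) with hlt | heq | hgt
    · rw [natDegree_sub_eq_right_of_natDegree_lt (by rw [hps, hfq]; exact hlt), hfq,
        Nat.max_eq_right (le_of_lt hlt)]
    · omega
    · rw [natDegree_sub_eq_left_of_natDegree_lt (by rw [hps, hfq]; exact hgt), hps,
        Nat.max_eq_left (le_of_lt hgt)]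

lemma adeg_rep {p q : Rp} (hpq : ¬(p = 0 ∧ q = 0)) :
    adeg (ZMod 3) (ogn p + ogn q * yy) = (p ^ 2 - fpol * q ^ 2).natDegree := by
  have hN0 : p ^ 2 - fpol * q ^ 2 ≠ 0 := norm_ne_zero hpq
  have key := norm_identity p q
  have ha : ogn p + ogn q * yy ≠ 0 := fun h => hpq (rep_zero h)
  have hb : ogn p - ogn q * yy ≠ 0 := by
    intro h
    have h2 : ogn p + ogn (-q) * yy = 0 := by rw [map_neg]; rw [← h]; ring
    have h3 := rep_zero h2
    exact hpq ⟨h3.1, neg_eq_zero.mp h3.2⟩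
  have hfd := (adeg_ogn hN0).2
  have hfd2 : FiniteDimensional (ZMod 3)
      (AdjoinRoot gpol ⧸ Ideal.span {(ogn p + ogn q * yy) * (ogn p - ogn q * yy)}) := by
    rw [key]; exact hfd
  have hmul := adeg_mul_of_fd ha hb hfd2
  rw [key, (adeg_ogn hN0).1] at hmul
  have hconj : adeg (ZMod 3) (ogn p - ogn q * yy) = adeg (ZMod 3) (ogn p + ogn q * yy) := by
    rw [← conj_apply p q]
    exact adeg_map_ringEquiv (conjEquiv.toRingEquiv) _
  rw [hconj] at hmul
  omega

lemma mem_S_iff (d : ℕ) (a : AdjoinRoot gpol) :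
    (a ≠ 0 ∧ adeg (ZMod 3) a = d) ↔
    ∃ p q : Rp, a = ogn p + ogn q * yy ∧ ¬(p = 0 ∧ q = 0) ∧
      (p ^ 2 - fpol * q ^ 2).natDegree = d := by
  constructor
  · rintro ⟨h0, hdeg⟩
    obtain ⟨p, q, rfl⟩ := rep_exists a
    have hpq : ¬(p = 0 ∧ q = 0) := by
      rintro ⟨rfl, rfl⟩
      simp at h0
    exact ⟨p, q, rfl, hpq, by rw [← adeg_rep hpq]; exact hdeg⟩
  · rintro ⟨p, q, rfl, hpq, hdeg⟩
    exact ⟨fun h => hpq (rep_zero h), by rw [adeg_rep hpq]; exact hdeg⟩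

lemma coset_square_sum {A : Type*} [CommRing A] {G : Type*} [AddCommGroup G] [Fintype G]
    (β : G →+ A) (hinj : Function.Injective β) (S : Finset A)
    (hS : ∀ a ∈ S, ∀ g : G, a + β g ∈ S)
    (hcard : ((Fintype.card G : ℕ) : A) = 0)
    (h1 : ∑ g : G, β g = 0) (h2 : ∑ g : G, β g ^ 2 = 0) :
    ∑ a ∈ S, a ^ 2 = 0 := by
  classical
  let W : AddSubgroup A := β.range
  let π : A → A ⧸ W := QuotientAddGroup.mk
  have hdec : ∑ a ∈ S, a ^ 2 = ∑ y ∈ S.image π, ∑ a ∈ S.filter (fun a => π a = y), a ^ 2 :=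
    (Finset.sum_fiberwise_of_maps_to (fun x hx => Finset.mem_image_of_mem π hx) _).symm
  rw [hdec]
  apply Finset.sum_eq_zero
  intro y hy
  obtain ⟨a₀, ha₀S, ha₀y⟩ := Finset.mem_image.mp hy
  have hfiber : S.filter (fun a => π a = y) = Finset.image (fun g => a₀ + β g) Finset.univ := by
    apply Finset.ext
    intro x
    simp only [Finset.mem_filter, Finset.mem_image, Finset.mem_univ, true_and]
    constructor
    · rintro ⟨hxS, hxy⟩
      have heq : π a₀ = π x := by rw [ha₀y, hxy]
      have hmem : -a₀ + x ∈ W := QuotientAddGroup.eq.mp heq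
      obtain ⟨g, hg⟩ := AddMonoidHom.mem_range.mp hmem
      exact ⟨g, by rw [hg]; ring⟩
    · rintro ⟨g, rfl⟩
      refine ⟨hS a₀ ha₀S g, ?_⟩
      rw [← ha₀y]
      show π (a₀ + β g) = π a₀
      apply (QuotientAddGroup.eq (s := W)).mpr
      have : -(a₀ + β g) + a₀ = -β g := by ring
      rw [this]
      exact W.neg_mem (AddMonoidHom.mem_range.mpr ⟨g, rfl⟩)
  rw [hfiber, Finset.sum_image (fun g _ g' _ h => hinj (by exact add_left_cancel h))]
  have hexp : ∀ g : G, (a₀ + β g) ^ 2 = a₀ ^ 2 + 2 * a₀ * β g + β g ^ 2 := fun g => by ring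
  simp_rw [hexp]
  rw [Finset.sum_add_distrib, Finset.sum_add_distrib, ← Finset.mul_sum, h1, mul_zero,
    h2, Finset.sum_const, Finset.card_univ, nsmul_eq_mul, hcard, zero_mul]
  ring

def βmap : ZMod 3 × ZMod 3 →+ AdjoinRoot gpol where
  toFun cb := ogn (C cb.1 * X + C cb.2)
  map_zero' := by simp
  map_add' x y := by
    show ogn (C (x.1 + y.1) * X + C (x.2 + y.2)) = _
    rw [← map_add ogn]
    congr 1
    rw [map_add, map_add]
    ring

lemma βmap_inj : Function.Injective βmap := by
  intro x y h
  have h2 : ogn ((C x.1 * X + C x.2) - (C y.1 * X + C y.2)) = 0 := by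
    rw [map_sub]
    exact sub_eq_zero.mpr h
  have h3 : (C x.1 * X + C x.2) - (C y.1 * X + C y.2) = 0 := by
    by_contra hne
    exact ogn_ne_zero hne h2
  have h4 : C x.1 * X + C x.2 = C y.1 * X + C y.2 := sub_eq_zero.mp h3
  have hc1 := congrArg (fun r => coeff r 1) h4
  have hc0 := congrArg (fun r => coeff r 0) h4
  simp only [coeff_add, coeff_C_mul, coeff_X_one, coeff_X_zero, coeff_C, mul_one, mul_zero,
    if_neg one_ne_zero, add_zero, if_pos rfl, zero_add] at hc1 hc0
  exact Prod.ext hc1 hc0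

lemma zmod3_sum_id : (∑ b : ZMod 3, b) = 0 := by decide
lemma zmod3_sum_sq : (∑ b : ZMod 3, b ^ 2) = 2 := by decide

lemma cast3 : ((3 : ℕ) : Rp) = (3 : Rp) := by norm_num

lemma wsum1 : ∑ g : ZMod 3 × ZMod 3, (C g.1 * X + C g.2 : Rp) = 0 := by
  rw [Fintype.sum_prod_type]
  have inner : ∀ c : ZMod 3, ∑ b : ZMod 3, (C c * X + C b : Rp) = 0 := by
    intro c
    rw [Finset.sum_add_distrib, Finset.sum_const, ← map_sum, zmod3_sum_id, map_zero, add_zero,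
      Finset.card_univ, ZMod.card, nsmul_eq_mul, cast3, three_eq_zero', zero_mul]
  simp [inner]

lemma sq_expand (c b : ZMod 3) :
    (C c * X + C b : Rp) ^ 2 = C (c ^ 2) * X ^ 2 + C (2 * c * b) * X + C (b ^ 2) := by
  rw [map_pow, map_pow, map_mul, map_mul, map_ofNat]
  ring

lemma wsum2 : ∑ g : ZMod 3 × ZMod 3, (C g.1 * X + C g.2 : Rp) ^ 2 = 0 := by
  rw [Fintype.sum_prod_type]
  have inner : ∀ c : ZMod 3, ∑ b : ZMod 3, (C c * X + C b : Rp) ^ 2 = C 2 := by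
    intro c
    simp_rw [sq_expand]
    rw [Finset.sum_add_distrib, Finset.sum_add_distrib, Finset.sum_const, Finset.card_univ,
      ZMod.card]
    rw [← Finset.sum_mul, ← map_sum, ← map_sum]
    rw [show (∑ b : ZMod 3, 2 * c * b) = 0 by rw [← Finset.mul_sum, zmod3_sum_id, mul_zero]]
    rw [zmod3_sum_sq, map_zero, zero_mul, add_zero, nsmul_eq_mul, cast3, three_eq_zero',
      zero_mul, zero_add]
  simp_rw [inner]
  rw [Finset.sum_const, Finset.card_univ, ZMod.card, nsmul_eq_mul, cast3, three_eq_zero',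
    zero_mul]

def φv (n : ℕ) (c : Fin n → ZMod 3) : Rp := ∑ i : Fin n, Polynomial.monomial (i : ℕ) (c i)

lemma bounded_deg_finite (n : ℕ) : {p : Rp | p.natDegree ≤ n}.Finite := by
  apply Set.Finite.subset (Set.finite_range (φv (n + 1)))
  intro p hp
  refine ⟨fun i => p.coeff i, ?_⟩
  unfold φv
  rw [Fin.sum_univ_eq_sum_range (fun i => Polynomial.monomial i (p.coeff i)) (n + 1)]
  exact (Polynomial.as_sum_range' p (n + 1) (Nat.lt_succ_of_le hp)).symm

lemma Sd_finite (d : ℕ) : {a : AdjoinRoot gpol | a ≠ 0 ∧ adeg (ZMod 3) a = d}.Finite := by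
  apply Set.Finite.subset (Set.Finite.image (fun pq : Rp × Rp => ogn pq.1 + ogn pq.2 * yy)
    (Set.Finite.prod (bounded_deg_finite d) (bounded_deg_finite d)))
  rintro a ha
  rw [Set.mem_setOf_eq, mem_S_iff] at ha
  obtain ⟨p, q, rfl, hpq, hdeg⟩ := ha
  refine ⟨(p, q), Set.mem_prod.mpr ⟨?_, ?_⟩, rfl⟩
  · show p.natDegree ≤ d
    by_cases hq : q = 0
    · subst hq
      rw [norm_natDegree_q0] at hdeg
      omega
    · rw [norm_natDegree hq] at hdeg
      have := le_max_left (2 * p.natDegree) (2 * q.natDegree + 5)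
      rw [hdeg] at this
      omega
  · show q.natDegree ≤ d
    by_cases hq : q = 0
    · subst hq
      simp
    · rw [norm_natDegree hq] at hdeg
      have := le_max_right (2 * p.natDegree) (2 * q.natDegree + 5)
      rw [hdeg] at this
      omega

lemma Sd_closed {d : ℕ} (hd : 3 ≤ d) {a : AdjoinRoot gpol}
    (hA : a ≠ 0 ∧ adeg (ZMod 3) a = d) (g : ZMod 3 × ZMod 3) :
    (a + βmap g ≠ 0 ∧ adeg (ZMod 3) (a + βmap g) = d) := by
  rw [mem_S_iff] at hA
  obtain ⟨p, q, rfl, hpq, hdeg⟩ := hA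
  rw [mem_S_iff]
  set r : Rp := C g.1 * X + C g.2 with hr
  have hrdeg : r.natDegree ≤ 1 := by
    apply le_trans (natDegree_add_le _ _)
    apply max_le
    · exact le_trans (natDegree_C_mul_le _ _) (by simp [natDegree_X])
    · simp [natDegree_C]
  have hrep : ogn p + ogn q * yy + βmap g = ogn (p + r) + ogn q * yy := by
    show _ + ogn r = _
    rw [map_add ogn p r]
    ring
  refine ⟨p + r, q, hrep, ?_, ?_⟩
  · by_cases hq : q = 0
    · subst hq
      rw [norm_natDegree_q0] at hdeg
      rintro ⟨hpr, -⟩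
      have h1 : p = -r := by rwa [add_eq_zero_iff_eq_neg] at hpr
      have h2 : p.natDegree ≤ 1 := by rw [h1, natDegree_neg]; exact hrdeg
      omega
    · intro h
      exact hq h.2
  · by_cases hq : q = 0
    · subst hq
      rw [norm_natDegree_q0] at hdeg ⊢
      rw [natDegree_add_eq_left_of_natDegree_lt (lt_of_le_of_lt hrdeg (by omega))]
      exact hdeg
    · rw [norm_natDegree hq] at hdeg ⊢
      by_cases hdp : 2 ≤ p.natDegree
      · rw [natDegree_add_eq_left_of_natDegree_lt (lt_of_le_of_lt hrdeg (by omega))]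
        exact hdeg
      · have h1 : (p + r).natDegree ≤ 1 :=
          le_trans (natDegree_add_le _ _) (max_le (by omega) hrdeg)
        rw [Nat.max_eq_right (by omega)] at hdeg
        rw [Nat.max_eq_right (by omega)]
        exact hdeg

lemma zetaCoeff_ge3 {d : ℕ} (hd : 3 ≤ d) : zetaCoeff (ZMod 3) (A := AdjoinRoot gpol) 2 d = 0 := by
  have hfin := Sd_finite d
  unfold zetaCoeff
  rw [show {a : AdjoinRoot gpol | a ≠ 0 ∧ adeg (ZMod 3) a = d} = ↑hfin.toFinset by
    simp [Set.Finite.coe_toFinset]]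
  rw [finsum_mem_coe_finset]
  apply coset_square_sum βmap βmap_inj
  · intro a ha g
    rw [Set.Finite.mem_toFinset] at ha ⊢
    exact Sd_closed hd ha g
  · have hc : Fintype.card (ZMod 3 × ZMod 3) = 9 := by
      rw [Fintype.card_prod, ZMod.card]
    rw [hc]
    rw [show ((9 : ℕ) : AdjoinRoot gpol) = (9 : AdjoinRoot gpol) by norm_num]
    linear_combination (3 : AdjoinRoot gpol) * three_eq_zero
  · have hb : ∀ g : ZMod 3 × ZMod 3, βmap g = ogn (C g.1 * X + C g.2) := fun g => rfl
    simp_rw [hb]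
    rw [← map_sum, wsum1, map_zero]
  · have hb : ∀ g : ZMod 3 × ZMod 3, βmap g ^ 2 = ogn ((C g.1 * X + C g.2) ^ 2) := fun g => by
      rw [map_pow]; exact rfl
    simp_rw [hb]
    rw [← map_sum, wsum2, map_zero]

lemma S1_empty : {a : AdjoinRoot gpol | a ≠ 0 ∧ adeg (ZMod 3) a = 1} = ∅ := by
  ext a
  simp only [Set.mem_setOf_eq, Set.mem_empty_iff_false, iff_false]
  rw [mem_S_iff]
  rintro ⟨p, q, rfl, hpq, hdeg⟩
  by_cases hq : q = 0
  · subst hq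
    rw [norm_natDegree_q0] at hdeg
    omega
  · rw [norm_natDegree hq] at hdeg
    have := le_max_right (2 * p.natDegree) (2 * q.natDegree + 5)
    rw [hdeg] at this
    omega

lemma zetaCoeff1 : zetaCoeff (ZMod 3) (A := AdjoinRoot gpol) 2 1 = 0 := by
  unfold zetaCoeff
  rw [show (1 : ℕ) = (1 : ℕ) from rfl, S1_empty]
  exact finsum_mem_empty

lemma S0 : {a : AdjoinRoot gpol | a ≠ 0 ∧ adeg (ZMod 3) a = 0}
    = {(1 : AdjoinRoot gpol), 2} := by
  ext a
  simp only [Set.mem_setOf_eq, Set.mem_insert_iff, Set.mem_singleton_iff]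
  rw [mem_S_iff]
  constructor
  · rintro ⟨p, q, rfl, hpq, hdeg⟩
    by_cases hq : q = 0
    · subst hq
      rw [norm_natDegree_q0] at hdeg
      have hdp : p.natDegree = 0 := by omega
      obtain ⟨c, rfl⟩ := Polynomial.natDegree_eq_zero.mp hdp
      have hc : c ≠ 0 := by
        rintro rfl
        exact hpq ⟨by simp, rfl⟩
      have hcase : ∀ x : ZMod 3, x ≠ 0 → x = 1 ∨ x = 2 := by decide
      rcases hcase c hc with rfl | rfl
      · left
        rw [map_zero, zero_mul, add_zero, map_one, map_one]
      · right
        rw [map_zero, zero_mul, add_zero]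
        rw [show (C (2 : ZMod 3)) = (2 : Rp) from map_ofNat C 2, map_ofNat]
    · rw [norm_natDegree hq] at hdeg
      have := le_max_right (2 * p.natDegree) (2 * q.natDegree + 5)
      rw [hdeg] at this
      omega
  · rintro (rfl | rfl)
    · refine ⟨1, 0, by rw [map_one, map_zero, zero_mul, add_zero], ?_, ?_⟩
      · rintro ⟨h, -⟩
        exact one_ne_zero h
      · rw [norm_natDegree_q0]
        simp
    · refine ⟨2, 0, by rw [map_ofNat, map_zero, zero_mul, add_zero], ?_, ?_⟩
      · rintro ⟨h, -⟩
        rw [show (2 : Rp) = C 2 from (map_ofNat C 2).symm, Polynomial.C_eq_zero] at h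
        exact (by decide : (2 : ZMod 3) ≠ 0) h
      · rw [norm_natDegree_q0]
        rw [show (2 : Rp) = C 2 from (map_ofNat C 2).symm, natDegree_C]

lemma one_ne_two15 : (1 : AdjoinRoot gpol) ≠ 2 := by
  intro h
  exact one_ne_zero (α := AdjoinRoot gpol) (by linear_combination -h)

lemma zetaCoeff0 : zetaCoeff (ZMod 3) (A := AdjoinRoot gpol) 2 0 = -1 := by
  unfold zetaCoeff
  rw [S0, show ({(1 : AdjoinRoot gpol), 2} : Set _)
      = (({1, 2} : Finset (AdjoinRoot gpol)) : Set _) by simp,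
    finsum_mem_coe_finset,
    Finset.sum_insert (Finset.notMem_singleton.mpr one_ne_two15), Finset.sum_singleton]
  linear_combination 2 * three_eq_zero

lemma S2 : {a : AdjoinRoot gpol | a ≠ 0 ∧ adeg (ZMod 3) a = 2}
    = ↑(Finset.image (fun cb : ZMod 3 × ZMod 3 => ogn (C cb.1 * X + C cb.2))
        (Finset.univ.filter (fun cb => cb.1 ≠ 0))) := by
  ext a
  simp only [Set.mem_setOf_eq, Finset.coe_image, Set.mem_image, Finset.mem_coe,
    Finset.mem_filter, Finset.mem_univ, true_and]
  rw [mem_S_iff]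
  constructor
  · rintro ⟨p, q, rfl, hpq, hdeg⟩
    by_cases hq : q = 0
    · subst hq
      rw [norm_natDegree_q0] at hdeg
      have hp : p ≠ 0 := fun h => hpq ⟨h, rfl⟩
      have hdp : p.natDegree = 1 := by omega
      have hform := Polynomial.eq_X_add_C_of_natDegree_le_one (le_of_eq hdp)
      refine ⟨(p.coeff 1, p.coeff 0), ?_, ?_⟩
      · show p.coeff 1 ≠ 0
        have hlc := Polynomial.leadingCoeff_ne_zero.mpr hp
        rw [Polynomial.leadingCoeff, hdp] at hlc
        exact hlc
      · rw [map_zero, zero_mul, add_zero]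
        exact congrArg ogn hform.symm
    · exfalso
      rw [norm_natDegree hq] at hdeg
      have := le_max_right (2 * p.natDegree) (2 * q.natDegree + 5)
      rw [hdeg] at this
      omega
  · rintro ⟨⟨c, b⟩, hc, rfl⟩
    refine ⟨C c * X + C b, 0, by rw [map_zero, zero_mul, add_zero], ?_, ?_⟩
    · rintro ⟨h, -⟩
      have := congrArg (fun r => coeff r 1) h
      simp only [coeff_add, coeff_C_mul, coeff_X_one, mul_one, coeff_C,
        if_neg one_ne_zero, add_zero, coeff_zero] at this
      exact hc this
    · rw [norm_natDegree_q0, Polynomial.natDegree_linear hc]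

lemma sum_filter_sq : ∑ cb ∈ Finset.univ.filter (fun cb : ZMod 3 × ZMod 3 => cb.1 ≠ 0),
    (C cb.1 * X + C cb.2 : Rp) ^ 2 = 1 := by
  have hsplit := Finset.sum_filter_add_sum_filter_not Finset.univ
    (fun cb : ZMod 3 × ZMod 3 => cb.1 ≠ 0) (fun cb => (C cb.1 * X + C cb.2 : Rp) ^ 2)
  rw [wsum2] at hsplit
  have hnot : ∑ cb ∈ Finset.univ.filter (fun cb : ZMod 3 × ZMod 3 => ¬cb.1 ≠ 0),
      (C cb.1 * X + C cb.2 : Rp) ^ 2 = C 2 := by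
    rw [show Finset.univ.filter (fun cb : ZMod 3 × ZMod 3 => ¬cb.1 ≠ 0)
        = Finset.image (fun b : ZMod 3 => ((0 : ZMod 3), b)) Finset.univ by decide]
    rw [Finset.sum_image (fun x _ y _ h => (Prod.ext_iff.mp h).2)]
    simp_rw [map_zero, zero_mul, zero_add, ← map_pow]
    rw [← map_sum, zmod3_sum_sq]
  have h2C : (C (2 : ZMod 3) : Rp) = 2 := map_ofNat C 2
  rw [h2C] at hnot
  linear_combination hsplit - hnot - three_eq_zero'

lemma zetaCoeff2' : zetaCoeff (ZMod 3) (A := AdjoinRoot gpol) 2 2 = 1 := by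
  unfold zetaCoeff
  rw [S2, finsum_mem_coe_finset]
  rw [Finset.sum_image (g := fun cb : ZMod 3 × ZMod 3 => ogn (C cb.1 * X + C cb.2))
    (fun x _ y _ h => βmap_inj (by exact h))]
  simp_rw [← map_pow]
  rw [← map_sum, sum_filter_sq, map_one]

lemma zetaCoeff_vanish {d : ℕ} (h0 : d ≠ 0) (h2 : d ≠ 2) :
    zetaCoeff (ZMod 3) (A := AdjoinRoot gpol) 2 d = 0 := by
  rcases Nat.lt_or_ge d 3 with hlt | hge
  · interval_cases d
    · exact absurd rfl h0
    · exact zetaCoeff1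
    · exact absurd rfl h2
  · exact zetaCoeff_ge3 hge

lemma zetaPoly_eq : zetaPoly (ZMod 3) (AdjoinRoot gpol) 2 = X ^ 2 - 1 := by
  unfold zetaPoly
  rw [finsum_eq_finset_sum_of_support_subset _ (s := ({0, 2} : Finset ℕ)) ?hsupp]
  case hsupp =>
    intro d hd
    simp only [Function.mem_support] at hd
    by_contra hmem
    simp only [Finset.coe_insert, Set.mem_insert_iff, Finset.coe_singleton,
      Set.mem_singleton_iff] at hmem
    push_neg at hmem
    rw [zetaCoeff_vanish hmem.1 hmem.2, map_zero, zero_mul] at hd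
    exact hd rfl
  rw [Finset.sum_insert (by norm_num), Finset.sum_singleton]
  rw [zetaCoeff0, zetaCoeff2', map_one, one_mul, map_neg, map_one, pow_zero, mul_one]
  ring

/-- For `A = F_3[x][y]/(y² − x(x+1)(x+2)(x²+1))` one has
`∑_{d ≥ 0} (∑_{a ∈ A∖{0}, deg a = d} a²) X^d = X² − 1` in `A[X]`; in particular the inner
sums vanish for all `d ∉ {0, 2}`, the zeta value `ζ(−2)` of `A` is `0`, and its order of
vanishing is exactly `1` (so Thakur's hyperelliptic order-2 theorem fails for `q = 3` even
though `l_3(2) = 2 = g`). -/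
theorem statement15 :
    zetaPoly (ZMod 3) A15 2 = X ^ 2 - 1 ∧
      (∀ d : ℕ, d ≠ 0 → d ≠ 2 → zetaCoeff (ZMod 3) (A := A15) 2 d = 0) ∧
      Polynomial.eval 1 (zetaPoly (ZMod 3) A15 2) = 0 ∧
      rootMultiplicity 1 (zetaPoly (ZMod 3) A15 2) = 1 := by
  have hpoly : zetaPoly (ZMod 3) A15 2 = X ^ 2 - 1 := zetaPoly_eq
  refine ⟨hpoly, fun d h0 h2 => zetaCoeff_vanish h0 h2, ?_, ?_⟩
  · rw [hpoly]
    simp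
  · rw [hpoly]
    have h2ne : (X ^ 2 - 1 : Polynomial A15) ≠ 0 := by
      intro h
      have h0 := congrArg (Polynomial.eval 0) h
      simp at h0
    have hfact : (X ^ 2 - 1 : Polynomial A15) = (X - Polynomial.C 1) * (X + Polynomial.C 1) := by
      rw [map_one]
      ring
    rw [hfact, Polynomial.rootMultiplicity_mul (by rw [← hfact]; exact h2ne),
      Polynomial.rootMultiplicity_X_sub_C_self,
      Polynomial.rootMultiplicity_eq_zero ?hroot]
    case hroot =>
      intro hroot
      rw [Polynomial.IsRoot, Polynomial.eval_add, Polynomial.eval_X, Polynomial.eval_C] at hroot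
      exact one_ne_zero (α := A15) (by linear_combination three_eq_zero - hroot)

end
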